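/- Let A and B be real symmetric positive definite n×n matrices and set X = {x ∈ ℝⁿ : ⟨Ax,x⟩ ≤ ħ} and P = {p ∈ ℝⁿ : ⟨Bp,p⟩ ≤ ħ}. Then X^ħ ⊆ P (i.e. (X,P) is a quantum dual pair) if and only if every eigenvalue of the matrix AB is ≤ 1 (equivalently, A^{1/2} B A^{1/2} ⪯ Iₙ), and X^ħ = P if and only if AB = Iₙ, i.e. B = A⁻¹. -/

import Mathlib

open Matrix

variable {n : ℕ}

-- symmetry of the bilinear form of a real hermitian matrix
lemma herm_dot {A : Matrix (Fin n) (Fin n) ℝ} (hA : A.IsHermitian)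
    (u v : Fin n → ℝ) : A.mulVec u ⬝ᵥ v = A.mulVec v ⬝ᵥ u := by
  have hT : Aᵀ = A := by
    have := hA.eq
    rwa [conjTranspose_eq_transpose_of_trivial] at this
  rw [dotProduct_comm (A.mulVec u) v, dotProduct_mulVec, ← mulVec_transpose, hT]

-- quadratic form is nonneg for posdef
lemma qf_nonneg {A : Matrix (Fin n) (Fin n) ℝ} (hA : A.PosSemidef)
    (u : Fin n → ℝ) : 0 ≤ A.mulVec u ⬝ᵥ u := by
  have := hA.dotProduct_mulVec_nonneg u
  simpa [dotProduct_comm] using this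

lemma qf_pos {A : Matrix (Fin n) (Fin n) ℝ} (hA : A.PosDef)
    {u : Fin n → ℝ} (hu : u ≠ 0) : 0 < A.mulVec u ⬝ᵥ u := by
  have := hA.dotProduct_mulVec_pos hu
  simpa [dotProduct_comm] using this

-- Cauchy-Schwarz for the bilinear form of a positive definite matrix
lemma cs {A : Matrix (Fin n) (Fin n) ℝ} (hA : A.PosDef) (u v : Fin n → ℝ) :
    (A.mulVec u ⬝ᵥ v) ^ 2 ≤ (A.mulVec u ⬝ᵥ u) * (A.mulVec v ⬝ᵥ v) := by
  rcases eq_or_ne v 0 with rfl | hv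
  · simp
  · have hc : 0 < A.mulVec v ⬝ᵥ v := qf_pos hA hv
    set c := A.mulVec v ⬝ᵥ v with hcdef
    set b := A.mulVec u ⬝ᵥ v with hbdef
    set a := A.mulVec u ⬝ᵥ u with hadef
    set t := b / c with htdef
    have h0 : 0 ≤ A.mulVec (u - t • v) ⬝ᵥ (u - t • v) := qf_nonneg hA.posSemidef _
    have hexp : A.mulVec (u - t • v) ⬝ᵥ (u - t • v) = a - 2 * t * b + t ^ 2 * c := by
      have hsymm : A.mulVec v ⬝ᵥ u = b := (herm_dot hA.1 u v).symm
      simp only [mulVec_sub, mulVec_smul, sub_dotProduct, dotProduct_sub,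
        smul_dotProduct, dotProduct_smul, smul_eq_mul, ← hadef, ← hbdef, ← hcdef, hsymm]
      ring
    rw [hexp, htdef] at h0
    have h1 : 0 ≤ a - 2 * (b / c) * b + (b / c) ^ 2 * c := h0
    have key : (b / c) * c = b := div_mul_cancel₀ b hc.ne'
    nlinarith [h1, hc, key]

-- A * (A⁻¹ *ᵥ p) = p
lemma mulVec_inv_cancel {A : Matrix (Fin n) (Fin n) ℝ} (hA : A.PosDef)
    (p : Fin n → ℝ) : A.mulVec (A⁻¹.mulVec p) = p := by
  rw [mulVec_mulVec, Matrix.mul_nonsing_inv _ hA.det_pos.ne'.isUnit, one_mulVec]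

-- polar dual of the ellipsoid of A is the ellipsoid of A⁻¹
lemma polar_eq {hbar : ℝ} (hhbar : 0 < hbar) {A : Matrix (Fin n) (Fin n) ℝ}
    (hA : A.PosDef) :
    {p : Fin n → ℝ | ∀ x ∈ {x : Fin n → ℝ | A.mulVec x ⬝ᵥ x ≤ hbar}, p ⬝ᵥ x ≤ hbar}
      = {p : Fin n → ℝ | A⁻¹.mulVec p ⬝ᵥ p ≤ hbar} := by
  ext p
  simp only [Set.mem_setOf_eq]
  constructor
  · intro H
    by_contra hlt
    push_neg at hlt
    set c := A⁻¹.mulVec p ⬝ᵥ p with hcdef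
    have hc : 0 < c := lt_trans hhbar hlt
    set t := Real.sqrt (hbar / c) with htdef
    have ht : 0 < t := Real.sqrt_pos.2 (div_pos hhbar hc)
    have ht2 : t ^ 2 = hbar / c := Real.sq_sqrt (div_pos hhbar hc).le
    have hpd : p ⬝ᵥ A⁻¹.mulVec p = c := by
      rw [hcdef, dotProduct_comm]
    have hx : A.mulVec (t • A⁻¹.mulVec p) ⬝ᵥ (t • A⁻¹.mulVec p) ≤ hbar := by
      rw [mulVec_smul, smul_dotProduct, dotProduct_smul, mulVec_inv_cancel hA,
        smul_eq_mul, smul_eq_mul, ← mul_assoc, ← pow_two, ht2, hpd]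
      rw [div_mul_cancel₀ _ hc.ne']
    have hle := H _ hx
    rw [dotProduct_smul, smul_eq_mul, hpd] at hle
    -- t * c = sqrt(hbar * c) > hbar since c > hbar
    have hsq : (t * c) ^ 2 = hbar * c := by
      rw [mul_pow, ht2]; field_simp
    have h4 : (t * c) ^ 2 ≤ hbar ^ 2 := by nlinarith [mul_pos ht hc]
    nlinarith [h4, hsq, hlt, hhbar]
  · intro hp x hx
    have hcs := cs hA (A⁻¹.mulVec p) x
    rw [mulVec_inv_cancel hA] at hcs
    have h1 : p ⬝ᵥ A⁻¹.mulVec p ≤ hbar := by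
      rw [dotProduct_comm]; exact hp
    have h2 : 0 ≤ p ⬝ᵥ A⁻¹.mulVec p := by
      have := qf_nonneg hA.inv.posSemidef p
      rwa [dotProduct_comm] at this
    have h3 : 0 ≤ A.mulVec x ⬝ᵥ x := qf_nonneg hA.posSemidef _
    have h5 : (p ⬝ᵥ x) ^ 2 ≤ hbar ^ 2 := by
      calc (p ⬝ᵥ x) ^ 2 ≤ (p ⬝ᵥ A⁻¹.mulVec p) * (A.mulVec x ⬝ᵥ x) := hcs
        _ ≤ hbar * hbar := mul_le_mul h1 hx h3 hhbar.le
        _ = hbar ^ 2 := (pow_two hbar).symm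
    nlinarith [h5, hhbar]

-- Loewner comparison from ellipsoid inclusion
lemma incl_iff_psd {hbar : ℝ} (hhbar : 0 < hbar) {C B : Matrix (Fin n) (Fin n) ℝ}
    (hC : C.PosDef) (hB : B.PosDef) :
    ({p : Fin n → ℝ | C.mulVec p ⬝ᵥ p ≤ hbar} ⊆ {p : Fin n → ℝ | B.mulVec p ⬝ᵥ p ≤ hbar})
      ↔ (C - B).PosSemidef := by
  constructor
  · intro h
    refine Matrix.PosSemidef.of_dotProduct_mulVec_nonneg (hC.1.sub hB.1) fun p => ?_
    rcases eq_or_ne p 0 with rfl | hp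
    · simp
    · have key : B.mulVec p ⬝ᵥ p ≤ C.mulVec p ⬝ᵥ p := by
        set c := C.mulVec p ⬝ᵥ p with hcdef
        have hc : 0 < c := qf_pos hC hp
        set t := Real.sqrt (hbar / c) with htdef
        have ht : 0 < t := Real.sqrt_pos.2 (div_pos hhbar hc)
        have ht2 : t ^ 2 = hbar / c := Real.sq_sqrt (div_pos hhbar hc).le
        have hmem : C.mulVec (t • p) ⬝ᵥ (t • p) ≤ hbar := by
          rw [mulVec_smul, smul_dotProduct, dotProduct_smul, smul_eq_mul, smul_eq_mul,
            ← mul_assoc, ← pow_two, ht2, ← hcdef, div_mul_cancel₀ _ hc.ne']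
        have := h hmem
        simp only [Set.mem_setOf_eq, mulVec_smul, smul_dotProduct, dotProduct_smul,
          smul_eq_mul, ← mul_assoc, ← pow_two, ht2] at this
        have hBp : hbar / c * (B.mulVec p ⬝ᵥ p) ≤ hbar := this
        calc B.mulVec p ⬝ᵥ p = c / hbar * (hbar / c * (B.mulVec p ⬝ᵥ p)) := by
              field_simp
          _ ≤ c / hbar * hbar := by
              apply mul_le_mul_of_nonneg_left hBp (div_pos hc hhbar).le
          _ = c := by field_simp
      have : 0 ≤ (C - B).mulVec p ⬝ᵥ p := by
        rw [sub_mulVec, sub_dotProduct]; linarith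
      simpa [dotProduct_comm] using this
  · intro h p hp
    simp only [Set.mem_setOf_eq] at hp ⊢
    have h2 : 0 ≤ (C - B).mulVec p ⬝ᵥ p := qf_nonneg h _
    rw [sub_mulVec, sub_dotProduct] at h2
    linarith

-- congruence by an invertible hermitian matrix preserves PSD
lemma psd_conj_iff {S M : Matrix (Fin n) (Fin n) ℝ} (hS : S.IsHermitian)
    (hdet : IsUnit S.det) : (S * M * S).PosSemidef ↔ M.PosSemidef := by
  constructor
  · intro h
    have h2 := h.mul_mul_conjTranspose_same S⁻¹
    have heq : S⁻¹ * (S * M * S) * (S⁻¹)ᴴ = M := by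
      rw [conjTranspose_nonsing_inv, hS.eq]
      simp only [← mul_assoc]
      rw [Matrix.nonsing_inv_mul _ hdet, one_mul, mul_assoc,
        Matrix.mul_nonsing_inv _ hdet, mul_one]
    rwa [heq] at h2
  · intro h
    have h2 := h.mul_mul_conjTranspose_same S
    rwa [hS.eq] at h2

-- spectrum of a hermitian real matrix is the range of its eigenvalues
lemma spectrum_eq_range {H : Matrix (Fin n) (Fin n) ℝ} (hH : H.IsHermitian) :
    spectrum ℝ H = Set.range hH.eigenvalues := by
  conv_lhs => rw [hH.spectral_theorem]
  rw [Unitary.conjStarAlgAut_apply, Unitary.spectrum_star_right_conjugate, spectrum_diagonal]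
  ext μ
  simp [Function.comp]

-- key: 1 - H PSD iff all eigenvalues ≤ 1
lemma one_sub_psd_iff {H : Matrix (Fin n) (Fin n) ℝ} (hH : H.IsHermitian) :
    (1 - H).PosSemidef ↔ ∀ i, hH.eigenvalues i ≤ 1 := by
  constructor
  · intro h i
    set v := hH.eigenvectorBasis i with hv
    have hnorm : (inner ℝ v v : ℝ) = 1 := by
      rw [real_inner_self_eq_norm_mul_norm, hH.eigenvectorBasis.orthonormal.1 i]
      norm_num
    have hdot : star (⇑v) ⬝ᵥ (⇑v) = 1 := by
      rw [← hnorm, EuclideanSpace.inner_eq_star_dotProduct, dotProduct_comm]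
    have h2 := h.dotProduct_mulVec_nonneg (⇑v)
    rw [sub_mulVec, one_mulVec, dotProduct_sub, hH.mulVec_eigenvectorBasis,
      dotProduct_smul, hdot] at h2
    rw [smul_eq_mul] at h2
    linarith [h2]
  · intro h
    have hU : (hH.eigenvectorUnitary : Matrix (Fin n) (Fin n) ℝ) *
        star (hH.eigenvectorUnitary : Matrix (Fin n) (Fin n) ℝ) = 1 :=
      Matrix.mem_unitaryGroup_iff.mp (hH.eigenvectorUnitary).2
    have hsplit : (1 : Matrix (Fin n) (Fin n) ℝ) - H =
        (hH.eigenvectorUnitary : Matrix (Fin n) (Fin n) ℝ) *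
          (1 - diagonal (RCLike.ofReal ∘ hH.eigenvalues)) *
          star (hH.eigenvectorUnitary : Matrix (Fin n) (Fin n) ℝ) := by
      rw [mul_sub, sub_mul, mul_one, hU, ← Unitary.conjStarAlgAut_apply (S := ℝ), ← hH.spectral_theorem]
    rw [hsplit]
    have hdiag : ((1 : Matrix (Fin n) (Fin n) ℝ) -
        diagonal (RCLike.ofReal ∘ hH.eigenvalues)).PosSemidef := by
      rw [← diagonal_one, diagonal_sub]
      refine posSemidef_diagonal_iff.mpr fun i => ?_
      simpa using h i
    have := hdiag.mul_mul_conjTranspose_same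
      (hH.eigenvectorUnitary : Matrix (Fin n) (Fin n) ℝ)
    rwa [← star_eq_conjTranspose] at this

-- PSD antisymmetry
lemma psd_antisymm {M : Matrix (Fin n) (Fin n) ℝ} (h1 : M.PosSemidef)
    (h2 : (-M).PosSemidef) : M = 0 := by
  have heig : ∀ i, h1.1.eigenvalues i = 0 := by
    intro i
    refine le_antisymm ?_ (h1.eigenvalues_nonneg i)
    have hv := h2.dotProduct_mulVec_nonneg (⇑(h1.1.eigenvectorBasis i))
    rw [neg_mulVec, dotProduct_neg, h1.1.mulVec_eigenvectorBasis, dotProduct_smul] at hv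
    have hval := h1.1.eigenvalues_eq i
    set v := h1.1.eigenvectorBasis i with hvdef
    have hnorm : (inner ℝ v v : ℝ) = 1 := by
      rw [real_inner_self_eq_norm_mul_norm, h1.1.eigenvectorBasis.orthonormal.1 i]
      norm_num
    have hdot : star (⇑v) ⬝ᵥ (⇑v) = 1 := by
      rw [← hnorm, EuclideanSpace.inner_eq_star_dotProduct, dotProduct_comm]
    rw [hdot, smul_eq_mul, mul_one] at hv
    linarith
  have : (RCLike.ofReal ∘ h1.1.eigenvalues : Fin n → ℝ) = fun _ => 0 := by
    funext i
    simp [heig i]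
  have hM := h1.1.spectral_theorem
  rw [this] at hM
  simpa using hM

-- spectral main lemma
lemma spectral_main {A B : Matrix (Fin n) (Fin n) ℝ} (hA : A.PosDef) (hB : B.PosDef) :
    (A⁻¹ - B).PosSemidef ↔ ∀ μ ∈ spectrum ℝ (A * B), μ ≤ 1 := by
  obtain ⟨S, hSherm, hSS⟩ : ∃ S : Matrix (Fin n) (Fin n) ℝ, S.IsHermitian ∧ S * S = A :=
    open scoped MatrixOrder in
    ⟨CFC.sqrt A, (CFC.sqrt_nonneg A).posSemidef.1, CFC.sqrt_mul_sqrt_self A hA.posSemidef.nonneg⟩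
  have hdetS : IsUnit S.det := by
    have hd : S.det * S.det = A.det := by rw [← det_mul, hSS]
    have : S.det ≠ 0 := by
      intro h0
      rw [h0, mul_zero] at hd
      exact hA.det_pos.ne' hd.symm
    exact this.isUnit
  have hSunit : IsUnit S := (isUnit_iff_isUnit_det S).2 hdetS
  have hkey : S * (A⁻¹ - B) * S = 1 - S * B * S := by
    rw [mul_sub, sub_mul]
    congr 1
    rw [← hSS, Matrix.mul_inv_rev]
    have h1 : S * (S⁻¹ * S⁻¹) * S = S * S⁻¹ * (S⁻¹ * S) := by
      simp only [mul_assoc]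
    rw [h1, Matrix.mul_nonsing_inv _ hdetS, Matrix.nonsing_inv_mul _ hdetS, one_mul]
  have hH : (S * B * S).IsHermitian := by
    have := isHermitian_conjTranspose_mul_mul S hB.1
    rwa [hSherm.eq] at this
  have hspec : spectrum ℝ (A * B) = spectrum ℝ (S * B * S) := by
    have h0H : (0 : ℝ) ∉ spectrum ℝ (S * B * S) :=
      spectrum.zero_notMem ℝ ((hSunit.mul hB.isUnit).mul hSunit)
    have h0AB : (0 : ℝ) ∉ spectrum ℝ (A * B) :=
      spectrum.zero_notMem ℝ (hA.isUnit.mul hB.isUnit)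
    have e1 : spectrum ℝ (S * B * S) \ {0} = spectrum ℝ (B * A) \ {0} := by
      have := spectrum.nonzero_mul_comm (𝕜 := ℝ) S (B * S)
      rw [← mul_assoc] at this
      rw [this, mul_assoc, hSS]
    have e2 : spectrum ℝ (B * A) \ {0} = spectrum ℝ (A * B) \ {0} :=
      spectrum.nonzero_mul_comm (𝕜 := ℝ) B A
    rw [← Set.diff_singleton_eq_self h0AB, ← Set.diff_singleton_eq_self h0H, e1, e2]
  rw [← psd_conj_iff hSherm hdetS (M := A⁻¹ - B), hkey, one_sub_psd_iff hH, hspec,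
    spectrum_eq_range hH]
  simp [Set.forall_mem_range]

/-- for real symmetric positive definite `A`, `B` and the ellipsoids
`X = {x : ⟨Ax,x⟩ ≤ ħ}`, `P = {p : ⟨Bp,p⟩ ≤ ħ}`, one has `X^ħ ⊆ P` (i.e. `(X,P)` is a
quantum dual pair) iff every eigenvalue of `AB` is `≤ 1`, and `X^ħ = P` iff `AB = 1`. -/
theorem statement2 (n : ℕ) (hbar : ℝ) (hhbar : 0 < hbar)
    (A B : Matrix (Fin n) (Fin n) ℝ) (hA : A.PosDef) (hB : B.PosDef) :
    (({p : Fin n → ℝ | ∀ x ∈ {x : Fin n → ℝ | A.mulVec x ⬝ᵥ x ≤ hbar}, p ⬝ᵥ x ≤ hbar}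
        ⊆ {p : Fin n → ℝ | B.mulVec p ⬝ᵥ p ≤ hbar})
      ↔ ∀ μ ∈ spectrum ℝ (A * B), μ ≤ 1) ∧
    (({p : Fin n → ℝ | ∀ x ∈ {x : Fin n → ℝ | A.mulVec x ⬝ᵥ x ≤ hbar}, p ⬝ᵥ x ≤ hbar}
        = {p : Fin n → ℝ | B.mulVec p ⬝ᵥ p ≤ hbar})
      ↔ A * B = 1) := by
  have hpolar := polar_eq hhbar hA
  have hAinv : A⁻¹.PosDef := hA.inv
  constructor
  · rw [hpolar, incl_iff_psd hhbar hAinv hB, spectral_main hA hB]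
  · constructor
    · intro heq
      rw [hpolar] at heq
      have psd1 : (A⁻¹ - B).PosSemidef :=
        (incl_iff_psd hhbar hAinv hB).1 heq.subset
      have psd2 : (B - A⁻¹).PosSemidef :=
        (incl_iff_psd hhbar hB hAinv).1 heq.superset
      have hzero : A⁻¹ - B = 0 := by
        refine psd_antisymm psd1 ?_
        rwa [neg_sub]
      have hinv : A⁻¹ = B := sub_eq_zero.mp hzero
      rw [← hinv, Matrix.mul_nonsing_inv _ hA.det_pos.ne'.isUnit]
    · intro hAB
      rw [hpolar, Matrix.inv_eq_right_inv hAB]
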